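/- Super-uniformity lemma under positive dependence (PRDS): let P = (P_1,…,P_n) be a random vector with values in [0,1]^n, fix an index i, and suppose P_i is superuniform, i.e. Pr(P_i ≤ u) ≤ u for all u ∈ [0,1], and that P is PRDS on index i: for every measurable nondecreasing set D ⊆ [0,1]^n (x ∈ D and x ≤ y coordinatewise implies y ∈ D) and all 0 < s ≤ t ≤ 1 with Pr(P_i ≤ s) > 0, one has Pr(P ∈ D | P_i ≤ s) ≤ Pr(P ∈ D | P_i ≤ t). Let f : [0,1]^n → [0,∞) be measurable and coordinatewise nonincreasing (x ≤ y coordinatewise implies f(x) ≥ f(y)). Then E[ 1{P_i ≤ f(P)} / f(P) ] ≤ 1, where the ratio is interpreted as 0 whenever the indicator equals 0 (note that superuniformity gives Pr(P_i = 0) = 0, so the event {P_i ≤ f(P), f(P) = 0} has probability zero). -/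

import Mathlib

open MeasureTheory ProbabilityTheory
open scoped ENNReal NNReal

theorem aux_superunif
    {Ω : Type*} [MeasurableSpace Ω] (μ : Measure Ω) [IsProbabilityMeasure μ]
    {n : ℕ} (P : Ω → Fin n → ℝ)
    (hPmeas : ∀ j, Measurable fun ω => P ω j)
    (hPrange : ∀ ω j, P ω j ∈ Set.Icc (0 : ℝ) 1)
    (i : Fin n)
    (hsup : ∀ u ∈ Set.Icc (0 : ℝ) 1, μ {ω | P ω i ≤ u} ≤ ENNReal.ofReal u)
    (hPRDS : ∀ D : Set (Fin n → ℝ), MeasurableSet D →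
      (∀ x ∈ D, ∀ y ∈ Set.Icc (0 : Fin n → ℝ) 1, x ≤ y → y ∈ D) →
      ∀ s t : ℝ, 0 < s → s ≤ t → t ≤ 1 → 0 < μ {ω | P ω i ≤ s} →
        (μ[|{ω | P ω i ≤ s}]) {ω | P ω ∈ D} ≤ (μ[|{ω | P ω i ≤ t}]) {ω | P ω ∈ D})
    (g : (Fin n → ℝ) → ℝ) (hg : Measurable g)
    (hg1 : ∀ x ∈ Set.Icc (0 : Fin n → ℝ) 1, g x ≤ 1)
    (hg_anti : ∀ x ∈ Set.Icc (0 : Fin n → ℝ) 1, ∀ y ∈ Set.Icc (0 : Fin n → ℝ) 1,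
      x ≤ y → g y ≤ g x) :
    ∫⁻ ω, (if P ω i ≤ g (P ω) then ENNReal.ofReal (g (P ω))⁻¹ else 0) ∂μ ≤ 1 := by
  classical
  have hPm : Measurable P := measurable_pi_iff.mpr hPmeas
  have hgP : Measurable fun ω => g (P ω) := hg.comp hPm
  have hmem : ∀ ω, P ω ∈ Set.Icc (0 : Fin n → ℝ) 1 := fun ω =>
    ⟨fun j => (hPrange ω j).1, fun j => (hPrange ω j).2⟩
  refine ENNReal.le_of_forall_pos_le_add fun ε hε _ => ?_
  set c : ℝ := 1 + (ε : ℝ) with hcdef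
  have hc1 : 1 < c := lt_add_of_pos_right _ (by exact_mod_cast hε)
  have hc0 : 0 < c := lt_trans one_pos hc1
  set u : ℕ → ℝ := fun k => c⁻¹ ^ k with hudef
  have hu_pos : ∀ k, 0 < u k := fun k => pow_pos (inv_pos.mpr hc0) k
  have hu_le1 : ∀ k, u k ≤ 1 := fun k =>
    pow_le_one₀ (by positivity) (inv_le_one_of_one_le₀ hc1.le)
  have hu_succ : ∀ k, u (k + 1) = u k * c⁻¹ := fun k => pow_succ _ _
  have hu_mono : ∀ k, u (k + 1) ≤ u k := by
    intro k
    rw [hu_succ k]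
    nlinarith [hu_pos k, inv_le_one_of_one_le₀ hc1.le, (hu_pos k).le]
  set E : ℕ → Set Ω := fun k => {ω | P ω i ≤ u k} with hE
  have mE : ∀ k, MeasurableSet (E k) := fun k =>
    measurableSet_le (hPmeas i) measurable_const
  set D : ℕ → Set (Fin n → ℝ) :=
    fun k => {x | x ∈ Set.Icc (0 : Fin n → ℝ) 1 ∧ g x ≤ u k} with hD
  have mD : ∀ k, MeasurableSet (D k) :=
    fun k => measurableSet_Icc.inter (hg measurableSet_Iic)
  set B : ℕ → Set Ω := fun k => {ω | P ω ∈ D k} with hB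
  have mB : ∀ k, MeasurableSet (B k) := fun k => hPm (mD k)
  have hBE : ∀ k ω, ω ∈ B k ↔ g (P ω) ≤ u k :=
    fun k ω => ⟨fun h => h.2, fun h => ⟨hmem ω, h⟩⟩
  set A : ℕ → Set Ω :=
    fun k => {ω | P ω i ≤ u k ∧ u (k + 1) < g (P ω) ∧ g (P ω) ≤ u k} with hA
  have mA : ∀ k, MeasurableSet (A k) := fun k =>
    (measurableSet_le (hPmeas i) measurable_const).inter
      ((measurableSet_lt measurable_const hgP).inter
        (measurableSet_le hgP measurable_const))
  -- decomposition
  have decomp : ∀ k, μ (E k ∩ B k) = μ (A k) + μ (E k ∩ B (k + 1)) := by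
    intro k
    have hset : E k ∩ B k = A k ∪ (E k ∩ B (k + 1)) := by
      ext ω
      constructor
      · rintro ⟨h1, h2⟩
        by_cases hlt : g (P ω) ≤ u (k + 1)
        · exact Or.inr ⟨h1, (hBE _ _).mpr hlt⟩
        · exact Or.inl ⟨h1, lt_of_not_ge hlt, (hBE _ _).mp h2⟩
      · rintro (⟨h1, _, h3⟩ | ⟨h1, h2⟩)
        · exact ⟨h1, (hBE _ _).mpr h3⟩
        · exact ⟨h1, (hBE _ _).mpr (le_trans ((hBE _ _).mp h2) (hu_mono k))⟩
    have hdisj : Disjoint (A k) (E k ∩ B (k + 1)) := by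
      rw [Set.disjoint_left]
      rintro ω ⟨_, h2, _⟩ ⟨_, h4⟩
      exact absurd ((hBE _ _).mp h4) (not_le.mpr h2)
    rw [hset, measure_union hdisj ((mE k).inter (mB (k + 1)))]
  have hinv : ∀ k, ENNReal.ofReal (u k)⁻¹ ≤ (μ (E k))⁻¹ := by
    intro k
    have h1 : μ (E k) ≤ ENNReal.ofReal (u k) :=
      hsup (u k) ⟨(hu_pos k).le, hu_le1 k⟩
    rw [ENNReal.ofReal_inv_of_pos (hu_pos k)]
    exact ENNReal.inv_le_inv' h1
  -- key step inequality
  have f2 : ∀ k, ENNReal.ofReal (u k)⁻¹ * μ (A k) + (μ[|E (k + 1)]) (B (k + 1))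
      ≤ (μ[|E k]) (B k) := by
    intro k
    rw [cond_apply (mE k), decomp k, mul_add]
    refine add_le_add (mul_le_mul_left (hinv k) _) ?_
    by_cases h0 : μ (E (k + 1)) = 0
    · have : μ (E (k + 1) ∩ B (k + 1)) = 0 :=
        measure_mono_null Set.inter_subset_left h0
      rw [cond_apply (mE (k + 1)), this, mul_zero]
      exact zero_le
    · have := hPRDS (D (k + 1)) (mD (k + 1))
        (fun x hx y hy hxy => ⟨hy, le_trans (hg_anti x hx.1 y hy hxy) hx.2⟩)
        (u (k + 1)) (u k) (hu_pos (k + 1)) (hu_mono k) (hu_le1 k)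
        (pos_iff_ne_zero.mpr h0)
      calc (μ[|E (k + 1)]) (B (k + 1)) ≤ (μ[|E k]) (B (k + 1)) := this
        _ = (μ (E k))⁻¹ * μ (E k ∩ B (k + 1)) := cond_apply (mE k) μ _
  have f1 : (μ[|E 0]) (B 0) ≤ 1 := by
    rw [cond_apply (mE 0)]
    rcases eq_or_ne (μ (E 0)) 0 with h | h
    · rw [measure_mono_null Set.inter_subset_left h, mul_zero]; exact zero_le_one
    · calc (μ (E 0))⁻¹ * μ (E 0 ∩ B 0) ≤ (μ (E 0))⁻¹ * μ (E 0) :=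
          mul_le_mul_right (measure_mono Set.inter_subset_left) _
        _ = 1 := ENNReal.inv_mul_cancel h (measure_ne_top μ _)
  have partial_sums : ∀ K : ℕ,
      (∑ k ∈ Finset.range K, ENNReal.ofReal (u k)⁻¹ * μ (A k)) ≤ 1 := by
    have h : ∀ K : ℕ,
        (∑ k ∈ Finset.range K, ENNReal.ofReal (u k)⁻¹ * μ (A k))
          + (μ[|E K]) (B K) ≤ 1 := by
      intro K
      induction K with
      | zero => simpa using f1
      | succ K ih =>
        rw [Finset.sum_range_succ, add_assoc]
        exact le_trans (add_le_add le_rfl (f2 K)) ih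
    exact fun K => le_trans le_self_add (h K)
  have tsum_le : (∑' k, ENNReal.ofReal (u k)⁻¹ * μ (A k)) ≤ 1 := by
    rw [ENNReal.tsum_eq_iSup_nat]
    exact iSup_le partial_sums
  -- pointwise bound
  have pointwise : ∀ ω,
      (if P ω i ≤ g (P ω) then ENNReal.ofReal (g (P ω))⁻¹ else 0)
        ≤ ENNReal.ofReal c *
          ∑' k, (A k).indicator (fun _ => ENNReal.ofReal (u k)⁻¹) ω := by
    intro ω
    split_ifs with h
    · by_cases hg0 : g (P ω) ≤ 0
      · rw [ENNReal.ofReal_eq_zero.mpr (inv_nonpos.mpr hg0)]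
        exact zero_le
      push_neg at hg0
      obtain ⟨k, hk1, hk2⟩ : ∃ k, u (k + 1) < g (P ω) ∧ g (P ω) ≤ u k := by
        have hex : ∃ k, u k < g (P ω) :=
          exists_pow_lt_of_lt_one hg0 (inv_lt_one_of_one_lt₀ hc1)
        have hK := Nat.find_spec hex
        have hKpos : Nat.find hex ≠ 0 := by
          intro h0
          rw [h0] at hK
          have : u 0 = 1 := pow_zero _
          rw [this] at hK
          exact absurd hK (not_lt.mpr (hg1 _ (hmem ω)))
        obtain ⟨m, hm⟩ := Nat.exists_eq_succ_of_ne_zero hKpos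
        refine ⟨m, ?_, not_lt.mp (Nat.find_min hex (by omega))⟩
        rw [← Nat.succ_eq_add_one, ← hm]; exact hK
      have hωA : ω ∈ A k := ⟨le_trans h hk2, hk1, hk2⟩
      have hstep : (g (P ω))⁻¹ ≤ c * (u k)⁻¹ := by
        have h1 : (g (P ω))⁻¹ ≤ (u (k + 1))⁻¹ :=
          inv_anti₀ (hu_pos (k + 1)) hk1.le
        have h2 : (u (k + 1))⁻¹ = c * (u k)⁻¹ := by
          rw [hu_succ k, mul_inv, inv_inv, mul_comm]
        linarith [h1, h2.symm ▸ h1]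
      calc ENNReal.ofReal (g (P ω))⁻¹ ≤ ENNReal.ofReal (c * (u k)⁻¹) :=
            ENNReal.ofReal_le_ofReal hstep
        _ = ENNReal.ofReal c * ENNReal.ofReal (u k)⁻¹ :=
            ENNReal.ofReal_mul hc0.le
        _ ≤ ENNReal.ofReal c *
            ∑' j, (A j).indicator (fun _ => ENNReal.ofReal (u j)⁻¹) ω := by
            refine mul_le_mul_right ?_ _
            refine le_trans ?_ (ENNReal.le_tsum k)
            rw [Set.indicator_of_mem hωA]
    · exact zero_le
  calc ∫⁻ ω, (if P ω i ≤ g (P ω) then ENNReal.ofReal (g (P ω))⁻¹ else 0) ∂μ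
      ≤ ∫⁻ ω, ENNReal.ofReal c *
          ∑' k, (A k).indicator (fun _ => ENNReal.ofReal (u k)⁻¹) ω ∂μ :=
        lintegral_mono pointwise
    _ = ENNReal.ofReal c *
        ∫⁻ ω, ∑' k, (A k).indicator (fun _ => ENNReal.ofReal (u k)⁻¹) ω ∂μ :=
        lintegral_const_mul' _ _ ENNReal.ofReal_ne_top
    _ = ENNReal.ofReal c *
        ∑' k, ∫⁻ ω, (A k).indicator (fun _ => ENNReal.ofReal (u k)⁻¹) ω ∂μ := by
        rw [lintegral_tsum fun k =>
          (measurable_const.indicator (mA k)).aemeasurable]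
    _ = ENNReal.ofReal c * ∑' k, ENNReal.ofReal (u k)⁻¹ * μ (A k) := by
        congr 1
        exact tsum_congr fun k => lintegral_indicator_const (mA k) _
    _ ≤ ENNReal.ofReal c * 1 := mul_le_mul_right tsum_le _
    _ = 1 + (ε : ℝ≥0∞) := by
        rw [mul_one, hcdef, ENNReal.ofReal_add zero_le_one ε.coe_nonneg,
          ENNReal.ofReal_one, ENNReal.ofReal_coe_nnreal]


/-- **Super-uniformity lemma under positive dependence (PRDS).**
Let `P = (P_1,…,P_n)` be a `[0,1]^n`-valued random vector which is PRDS on index `i`, let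
`P_i` be superuniform, and let `f : [0,1]^n → [0,∞)` be measurable and coordinatewise
nonincreasing. Then `E[ 1{P_i ≤ f(P)} / f(P) ] ≤ 1`, the ratio being interpreted as `0`
when the indicator vanishes (superuniformity gives `Pr(P_i = 0) = 0`, so
`{P_i ≤ f(P), f(P) = 0}` is null). -/
theorem superuniformity_lemma_prds
    {Ω : Type*} [MeasurableSpace Ω] (μ : Measure Ω) [IsProbabilityMeasure μ]
    {n : ℕ} (P : Ω → Fin n → ℝ)
    (hPmeas : ∀ j, Measurable fun ω => P ω j)
    (hPrange : ∀ ω j, P ω j ∈ Set.Icc (0 : ℝ) 1)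
    (i : Fin n)
    (hsup : ∀ u ∈ Set.Icc (0 : ℝ) 1, μ {ω | P ω i ≤ u} ≤ ENNReal.ofReal u)
    -- PRDS on index `i`: for every measurable nondecreasing `D ⊆ [0,1]^n` and all
    -- `0 < s ≤ t ≤ 1` with `Pr(P_i ≤ s) > 0`, `Pr(P ∈ D | P_i ≤ s) ≤ Pr(P ∈ D | P_i ≤ t)`.
    (hPRDS : ∀ D : Set (Fin n → ℝ), MeasurableSet D →
      (∀ x ∈ D, ∀ y ∈ Set.Icc (0 : Fin n → ℝ) 1, x ≤ y → y ∈ D) →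
      ∀ s t : ℝ, 0 < s → s ≤ t → t ≤ 1 → 0 < μ {ω | P ω i ≤ s} →
        (μ[|{ω | P ω i ≤ s}]) {ω | P ω ∈ D} ≤ (μ[|{ω | P ω i ≤ t}]) {ω | P ω ∈ D})
    (f : (Fin n → ℝ) → ℝ) (hf : Measurable f)
    (hf_nonneg : ∀ x ∈ Set.Icc (0 : Fin n → ℝ) 1, 0 ≤ f x)
    (hf_anti : ∀ x ∈ Set.Icc (0 : Fin n → ℝ) 1, ∀ y ∈ Set.Icc (0 : Fin n → ℝ) 1,
      x ≤ y → f y ≤ f x) :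
    ∫⁻ ω, (if P ω i ≤ f (P ω) then ENNReal.ofReal (f (P ω))⁻¹ else 0) ∂μ ≤ 1 := by
  set g : (Fin n → ℝ) → ℝ := fun x => min (f x) 1 with hgdef
  have hmem : ∀ ω, P ω ∈ Set.Icc (0 : Fin n → ℝ) 1 := fun ω =>
    ⟨fun j => (hPrange ω j).1, fun j => (hPrange ω j).2⟩
  have hmono : ∀ ω,
      (if P ω i ≤ f (P ω) then ENNReal.ofReal (f (P ω))⁻¹ else 0)
        ≤ (if P ω i ≤ g (P ω) then ENNReal.ofReal (g (P ω))⁻¹ else 0) := by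
    intro ω
    by_cases h : P ω i ≤ f (P ω)
    · by_cases h1 : f (P ω) ≤ 1
      · rw [if_pos h, if_pos (by rw [hgdef]; simpa [min_eq_left h1] using h)]
        simp [hgdef, min_eq_left h1]
      · push_neg at h1
        have hg1 : g (P ω) = 1 := min_eq_right h1.le
        rw [if_pos h, if_pos (by rw [hg1]; exact (hPrange ω i).2), hg1]
        refine ENNReal.ofReal_le_ofReal ?_
        rw [inv_one]
        exact inv_le_one_of_one_le₀ h1.le
    · rw [if_neg h]; exact zero_le
  refine le_trans (lintegral_mono hmono) ?_
  exact aux_superunif μ P hPmeas hPrange i hsup hPRDS g (hf.min measurable_const)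
    (fun x _ => min_le_right _ _)
    (fun x hx y hy hxy => min_le_min (hf_anti x hx y hy hxy) le_rfl)
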